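/- Let A be a matrix with entries in B(H). Then A ∈ L¹_l(ℓ²(H)) if and only if the function t ↦ f_A(t) = (e^{i(j−k)t}T_{kj}) is continuous from 𝕋 into M_l(ℓ²(H)) (with the left Schur multiplier norm). -/

import Mathlib

open Finset Filter

noncomputable section

variable {H : Type*} [NormedAddCommGroup H] [InnerProductSpace ℂ H]
  [CompleteSpace H] [TopologicalSpace.SeparableSpace H]

/-- `A` defines a bounded operator on `ℓ²(H)` with norm at most `C`, expressed through
uniform bounds of the associated bilinear form on finitely supported sequences. -/
def SchurBoundedBy (A : ℕ → ℕ → (H →L[ℂ] H)) (C : ℝ) : Prop :=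
  ∀ (F G : Finset ℕ) (x y : ℕ → H),
    ‖∑ k ∈ G, ∑ j ∈ F, (inner ℂ (A k j (x j)) (y k) : ℂ)‖ ≤
      C * Real.sqrt (∑ j ∈ F, ‖x j‖ ^ 2) * Real.sqrt (∑ k ∈ G, ‖y k‖ ^ 2)

/-- `A ∈ B(ℓ²(H))`. -/
def MemB (A : ℕ → ℕ → (H →L[ℂ] H)) : Prop :=
  ∃ C, 0 ≤ C ∧ SchurBoundedBy A C

/-- The Schur product of two operator matrices: entrywise composition. -/
def schur (A B : ℕ → ℕ → (H →L[ℂ] H)) : ℕ → ℕ → (H →L[ℂ] H) :=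
  fun k j => (A k j).comp (B k j)

/-- `A` is a right Schur multiplier with multiplier norm at most `C`. -/
def MrBoundedBy (A : ℕ → ℕ → (H →L[ℂ] H)) (C : ℝ) : Prop :=
  ∀ (B : ℕ → ℕ → (H →L[ℂ] H)) (D : ℝ), 0 ≤ D → SchurBoundedBy B D →
    SchurBoundedBy (schur B A) (C * D)

/-- `A` is a left Schur multiplier with multiplier norm at most `C`. -/
def MlBoundedBy (A : ℕ → ℕ → (H →L[ℂ] H)) (C : ℝ) : Prop :=
  ∀ (B : ℕ → ℕ → (H →L[ℂ] H)) (D : ℝ), 0 ≤ D → SchurBoundedBy B D →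
    SchurBoundedBy (schur A B) (C * D)

/-- `A ∈ M_r(ℓ²(H))`. -/
def MemMr (A : ℕ → ℕ → (H →L[ℂ] H)) : Prop :=
  ∃ C, 0 ≤ C ∧ MrBoundedBy A C

/-- `A ∈ M_l(ℓ²(H))`. -/
def MemMl (A : ℕ → ℕ → (H →L[ℂ] H)) : Prop :=
  ∃ C, 0 ≤ C ∧ MlBoundedBy A C

/-- A matrix polynomial: supported on finitely many diagonals, with uniformly
bounded operator entries. -/
def IsMatPoly (A : ℕ → ℕ → (H →L[ℂ] H)) : Prop :=
  (∃ N : ℕ, ∀ k j : ℕ, N < ((j : ℤ) - (k : ℤ)).natAbs → A k j = 0) ∧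
    ∃ M : ℝ, ∀ k j : ℕ, ‖A k j‖ ≤ M

/-- `A ∈ L¹_r(ℓ²(H))`: `A` is a right Schur multiplier lying in the closure of the
matrix polynomials in the right multiplier norm. -/
def MemL1r (A : ℕ → ℕ → (H →L[ℂ] H)) : Prop :=
  MemMr A ∧ ∀ ε : ℝ, 0 < ε → ∃ P : ℕ → ℕ → (H →L[ℂ] H),
    IsMatPoly P ∧ MrBoundedBy (fun k j => A k j - P k j) ε

/-- `A ∈ L¹_l(ℓ²(H))`: `A` is a left Schur multiplier lying in the closure of the
matrix polynomials in the left multiplier norm. -/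
def MemL1l (A : ℕ → ℕ → (H →L[ℂ] H)) : Prop :=
  MemMl A ∧ ∀ ε : ℝ, 0 < ε → ∃ P : ℕ → ℕ → (H →L[ℂ] H),
    IsMatPoly P ∧ MlBoundedBy (fun k j => A k j - P k j) ε

/-- The modulated matrix `f_A(t) = (e^{i(j-k)t} T_{kj})`. -/
def modMatrix (A : ℕ → ℕ → (H →L[ℂ] H)) (t : ℝ) : ℕ → ℕ → (H →L[ℂ] H) :=
  fun k j => Complex.exp ((((j : ℤ) - (k : ℤ) : ℤ) : ℂ) * t * Complex.I) • A k j

namespace SchurAux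
set_option linter.unusedSectionVars false

local notation "⟪" x ", " y "⟫" => (inner ℂ x y : ℂ)

/-! ### The unimodular exponential -/

def eθ (r : ℝ) : ℂ := Complex.exp (r * Complex.I)

lemma norm_eθ (r : ℝ) : ‖eθ r‖ = 1 := Complex.norm_exp_ofReal_mul_I r

lemma eθ_ne_zero (r : ℝ) : eθ r ≠ 0 := Complex.exp_ne_zero _

lemma eθ_add (r s : ℝ) : eθ (r + s) = eθ r * eθ s := by
  rw [eθ, eθ, eθ, ← Complex.exp_add]; push_cast; ring_nf

lemma eθ_zero : eθ 0 = 1 := by simp [eθ]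

lemma eθ_inv (r : ℝ) : (eθ r)⁻¹ = eθ (-r) := by
  rw [eθ, eθ, ← Complex.exp_neg]; push_cast; ring_nf

lemma conj_eθ (r : ℝ) : (starRingEnd ℂ) (eθ r) = eθ (-r) := by
  rw [eθ, eθ, ← Complex.exp_conj]
  congr 1
  simp [Complex.conj_ofReal]

lemma eθ_int_two_pi (q : ℤ) : eθ (2 * Real.pi * q) = 1 := by
  rw [eθ]
  have : ((2 * Real.pi * q : ℝ) : ℂ) * Complex.I = (q : ℂ) * (2 * (Real.pi : ℂ) * Complex.I) := by
    push_cast; ring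
  rw [this, Complex.exp_int_mul_two_pi_mul_I]

lemma eθ_nat_pow (r : ℝ) (p : ℕ) : eθ r ^ p = eθ (p * r) := by
  rw [eθ, eθ, ← Complex.exp_nat_mul]; push_cast; ring_nf

lemma modMatrix_eq (A : ℕ → ℕ → (H →L[ℂ] H)) (t : ℝ) (k j : ℕ) :
    modMatrix A t k j = eθ (((j : ℤ) - (k : ℤ)) * t) • A k j := by
  rw [modMatrix, eθ]
  congr 2
  push_cast; ring

lemma modMatrix_zero (A : ℕ → ℕ → (H →L[ℂ] H)) : modMatrix A 0 = A := by
  funext k j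
  rw [modMatrix_eq]
  simp [eθ_zero]

lemma modMatrix_two_pi_sub (A : ℕ → ℕ → (H →L[ℂ] H)) (s : ℝ) :
    modMatrix A (-s) = modMatrix A (2 * Real.pi - s) := by
  funext k j
  rw [modMatrix_eq, modMatrix_eq]
  congr 1
  have : ((j : ℤ) - (k : ℤ) : ℝ) * (2 * Real.pi - s)
      = ((j : ℤ) - (k : ℤ) : ℝ) * (-s) + 2 * Real.pi * (((j : ℤ) - (k : ℤ) : ℤ) : ℝ) := by
    push_cast; ring
  rw [this, eθ_add, eθ_int_two_pi, mul_one]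

/-! ### Basic stability of `SchurBoundedBy` -/

lemma sqrts_nonneg (F G : Finset ℕ) (x y : ℕ → H) :
    0 ≤ Real.sqrt (∑ j ∈ F, ‖x j‖ ^ 2) * Real.sqrt (∑ k ∈ G, ‖y k‖ ^ 2) :=
  mul_nonneg (Real.sqrt_nonneg _) (Real.sqrt_nonneg _)

lemma sb_mono {A : ℕ → ℕ → (H →L[ℂ] H)} {C C' : ℝ} (h : SchurBoundedBy A C) (hle : C ≤ C') :
    SchurBoundedBy A C' := by
  intro F G x y
  refine (h F G x y).trans ?_
  rw [mul_assoc, mul_assoc]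
  exact mul_le_mul_of_nonneg_right hle (sqrts_nonneg F G x y)

lemma sb_zero : SchurBoundedBy (fun (_ _ : ℕ) => (0 : H →L[ℂ] H)) 0 := by
  intro F G x y
  simp [sqrts_nonneg]

lemma sb_add {A A' : ℕ → ℕ → (H →L[ℂ] H)} {C C' : ℝ}
    (h : SchurBoundedBy A C) (h' : SchurBoundedBy A' C') :
    SchurBoundedBy (fun k j => A k j + A' k j) (C + C') := by
  intro F G x y
  have key : ∑ k ∈ G, ∑ j ∈ F, ⟪(A k j + A' k j) (x j), y k⟫
      = (∑ k ∈ G, ∑ j ∈ F, ⟪A k j (x j), y k⟫) + ∑ k ∈ G, ∑ j ∈ F, ⟪A' k j (x j), y k⟫ := by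
    rw [← Finset.sum_add_distrib]
    refine Finset.sum_congr rfl fun k _ => ?_
    rw [← Finset.sum_add_distrib]
    refine Finset.sum_congr rfl fun j _ => ?_
    rw [ContinuousLinearMap.add_apply, inner_add_left]
  rw [key]
  calc ‖_ + _‖ ≤ _ := norm_add_le _ _
    _ ≤ _ := add_le_add (h F G x y) (h' F G x y)
    _ = (C + C') * Real.sqrt (∑ j ∈ F, ‖x j‖ ^ 2) * Real.sqrt (∑ k ∈ G, ‖y k‖ ^ 2) := by ring

lemma sb_neg {A : ℕ → ℕ → (H →L[ℂ] H)} {C : ℝ} (h : SchurBoundedBy A C) :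
    SchurBoundedBy (fun k j => -A k j) C := by
  intro F G x y
  have key : ∑ k ∈ G, ∑ j ∈ F, ⟪(-A k j) (x j), y k⟫
      = -∑ k ∈ G, ∑ j ∈ F, ⟪A k j (x j), y k⟫ := by
    rw [← Finset.sum_neg_distrib]
    refine Finset.sum_congr rfl fun k _ => ?_
    rw [← Finset.sum_neg_distrib]
    refine Finset.sum_congr rfl fun j _ => ?_
    rw [ContinuousLinearMap.neg_apply, inner_neg_left]
  rw [key, norm_neg]
  exact h F G x y

/-- Twisting the bilinear form of a Schur-bounded matrix by a unimodular
"rank-one modulation" preserves the bound. -/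
lemma sb_twist {B : ℕ → ℕ → (H →L[ℂ] H)} {D : ℝ} (hB : SchurBoundedBy B D)
    (w : ℕ → ℂ) (hw : ∀ n, ‖w n‖ = 1) (F G : Finset ℕ) (x y : ℕ → H) :
    ‖∑ k ∈ G, ∑ j ∈ F, (w j * (w k)⁻¹) * ⟪B k j (x j), y k⟫‖ ≤
      D * Real.sqrt (∑ j ∈ F, ‖x j‖ ^ 2) * Real.sqrt (∑ k ∈ G, ‖y k‖ ^ 2) := by
  have key : ∑ k ∈ G, ∑ j ∈ F, (w j * (w k)⁻¹) * ⟪B k j (x j), y k⟫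
      = ∑ k ∈ G, ∑ j ∈ F, ⟪B k j (((starRingEnd ℂ) (w j)) • x j), (w k)⁻¹ • y k⟫ := by
    refine Finset.sum_congr rfl fun k _ => Finset.sum_congr rfl fun j _ => ?_
    rw [ContinuousLinearMap.map_smul, inner_smul_left, inner_smul_right,
      RingHomCompTriple.comp_apply, RingHom.id_apply]
    ring
  rw [key]
  have := hB F G (fun j => ((starRingEnd ℂ) (w j)) • x j) (fun k => (w k)⁻¹ • y k)
  simpa [norm_smul, hw, RCLike.norm_conj] using this

/-- Modulating a Schur-bounded matrix entrywise preserves the bound. -/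
lemma sb_mod {B : ℕ → ℕ → (H →L[ℂ] H)} {D : ℝ} (hB : SchurBoundedBy B D)
    (w : ℕ → ℂ) (hw : ∀ n, ‖w n‖ = 1) :
    SchurBoundedBy (fun k j => (w j * (w k)⁻¹) • B k j) D := by
  intro F G x y
  have key : ∑ k ∈ G, ∑ j ∈ F, ⟪((w j * (w k)⁻¹) • B k j) (x j), y k⟫
      = ∑ k ∈ G, ∑ j ∈ F,
          (((starRingEnd ℂ) (w j)) * (((starRingEnd ℂ) (w k)))⁻¹) * ⟪B k j (x j), y k⟫ := by
    refine Finset.sum_congr rfl fun k _ => Finset.sum_congr rfl fun j _ => ?_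
    rw [ContinuousLinearMap.smul_apply, inner_smul_left, map_mul, map_inv₀]
  rw [key]
  exact sb_twist hB (fun n => (starRingEnd ℂ) (w n)) (fun n => by simp [RCLike.norm_conj, hw n]) F G x y

end SchurAux

namespace SchurAux
set_option linter.unusedSectionVars false

local notation "⟪" x ", " y "⟫" => (inner ℂ x y : ℂ)

/-! ### Discrete delta via roots of unity -/

lemma delta_sum (m : ℕ) (hm : 0 < m) (a : ℤ) :
    ∑ l ∈ Finset.range m, eθ (2 * Real.pi * a * l / m) = if (m:ℤ) ∣ a then (m:ℂ) else 0 := by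
  have hm' : (m:ℝ) ≠ 0 := Nat.cast_ne_zero.2 hm.ne'
  have hexp : ∀ l : ℕ, eθ (2 * Real.pi * a * l / m) = eθ (2 * Real.pi * a / m) ^ l := by
    intro l
    rw [eθ_nat_pow]
    congr 1
    field_simp
  by_cases h : (m:ℤ) ∣ a
  · obtain ⟨q, hq⟩ := id h
    have ha : (a:ℝ) = (m:ℝ) * (q:ℝ) := by exact_mod_cast hq
    have hz : eθ (2 * Real.pi * a / m) = 1 := by
      have h2 : (2 * Real.pi * (a:ℝ) / m) = 2 * Real.pi * ((q : ℤ) : ℝ) := by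
        rw [ha]; field_simp
      rw [h2, eθ_int_two_pi]
    rw [if_pos h]
    simp [hexp, hz]
  · have hz : eθ (2 * Real.pi * a / m) ≠ 1 := by
      intro hzz
      rw [eθ, Complex.exp_eq_one_iff] at hzz
      obtain ⟨q, hq⟩ := hzz
      refine h ⟨q, ?_⟩
      have hπ : (2 * (Real.pi:ℂ) * Complex.I) ≠ 0 := by
        simp [Real.pi_ne_zero, Complex.I_ne_zero]
      have hcast : (2 * (Real.pi:ℂ) * Complex.I) * ((a:ℂ)/(m:ℂ))
          = ((2 * Real.pi * (a:ℝ) / (m:ℝ) : ℝ) : ℂ) * Complex.I := by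
        push_cast; ring
      have h1 : (2 * (Real.pi:ℂ) * Complex.I) * ((a:ℂ)/(m:ℂ))
          = (2 * (Real.pi:ℂ) * Complex.I) * q := by
        rw [hcast, hq]; ring
      have h2 : (a:ℂ)/(m:ℂ) = q := mul_left_cancel₀ hπ h1
      have hmc : (m:ℂ) ≠ 0 := by exact_mod_cast hm'
      have h3 : (a:ℂ) = (m:ℂ) * q := by
        rw [div_eq_iff hmc] at h2
        rw [h2]; ring
      exact_mod_cast h3
    simp only [hexp]
    rw [geom_sum_eq hz, if_neg h]
    have hzm : eθ (2 * Real.pi * a / m) ^ m = 1 := by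
      rw [eθ_nat_pow]
      have h2 : (m:ℝ) * (2 * Real.pi * a / m) = 2 * Real.pi * ((a : ℤ) : ℝ) := by
        field_simp
      rw [h2, eθ_int_two_pi]
    rw [hzm, sub_self, zero_div]

/-! ### Extracting a diagonal preserves Schur bounds -/

lemma sb_diag {B : ℕ → ℕ → (H →L[ℂ] H)} {D : ℝ} (hB : SchurBoundedBy B D) (d : ℤ) :
    SchurBoundedBy (fun k j => if (j:ℤ) - (k:ℤ) = d then B k j else 0) D := by
  intro F G x y
  set m : ℕ := F.sup id + G.sup id + d.natAbs + 1 with hmdef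
  have hm0 : 0 < m := by omega
  have hmr : (m:ℝ) ≠ 0 := Nat.cast_ne_zero.2 hm0.ne'
  have inner_eq : ∀ k ∈ G, ∀ j ∈ F,
      ⟪(if (j:ℤ) - (k:ℤ) = d then B k j else 0 : H →L[ℂ] H) (x j), y k⟫
        = (m:ℂ)⁻¹ * ∑ l ∈ Finset.range m,
            eθ (2 * Real.pi * (((j:ℤ) - (k:ℤ) - d : ℤ)) * l / m) * ⟪B k j (x j), y k⟫ := by
    intro k hk j hj
    rw [← Finset.sum_mul, delta_sum m hm0 _]
    by_cases hd : (j:ℤ) - (k:ℤ) = d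
    · have h0 : (j:ℤ) - (k:ℤ) - d = 0 := by omega
      rw [h0, if_pos (dvd_zero _), if_pos hd]
      have hmc : (m:ℂ) ≠ 0 := by exact_mod_cast hmr
      field_simp
    · have hj' : j ≤ F.sup id := Finset.le_sup (f := id) hj
      have hk' : k ≤ G.sup id := Finset.le_sup (f := id) hk
      have hnd : ¬ ((m:ℤ) ∣ ((j:ℤ) - (k:ℤ) - d)) := by
        intro hdvd
        have hne : (j:ℤ) - (k:ℤ) - d ≠ 0 := by omega
        have h1 : (m:ℤ) ≤ |(j:ℤ) - (k:ℤ) - d| := Int.le_of_dvd (abs_pos.mpr hne) ((dvd_abs _ _).mpr hdvd)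
        rw [Int.abs_eq_natAbs] at h1
        omega
      rw [if_neg hnd, if_neg hd]
      simp
  have key : ∑ k ∈ G, ∑ j ∈ F, ⟪(if (j:ℤ) - (k:ℤ) = d then B k j else 0 : H →L[ℂ] H) (x j), y k⟫
      = (m:ℂ)⁻¹ * ∑ l ∈ Finset.range m, ∑ k ∈ G, ∑ j ∈ F,
          eθ (2 * Real.pi * (((j:ℤ) - (k:ℤ) - d : ℤ)) * l / m) * ⟪B k j (x j), y k⟫ := by
    calc ∑ k ∈ G, ∑ j ∈ F, ⟪(if (j:ℤ) - (k:ℤ) = d then B k j else 0 : H →L[ℂ] H) (x j), y k⟫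
        = ∑ k ∈ G, ∑ j ∈ F, (m:ℂ)⁻¹ * ∑ l ∈ Finset.range m,
            eθ (2 * Real.pi * (((j:ℤ) - (k:ℤ) - d : ℤ)) * l / m) * ⟪B k j (x j), y k⟫ :=
          Finset.sum_congr rfl fun k hk => Finset.sum_congr rfl fun j hj => inner_eq k hk j hj
      _ = ∑ k ∈ G, (m:ℂ)⁻¹ * ∑ l ∈ Finset.range m, ∑ j ∈ F,
            eθ (2 * Real.pi * (((j:ℤ) - (k:ℤ) - d : ℤ)) * l / m) * ⟪B k j (x j), y k⟫ := by
          refine Finset.sum_congr rfl fun k _ => ?_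
          rw [← Finset.mul_sum, Finset.sum_comm]
      _ = (m:ℂ)⁻¹ * ∑ k ∈ G, ∑ l ∈ Finset.range m, ∑ j ∈ F,
            eθ (2 * Real.pi * (((j:ℤ) - (k:ℤ) - d : ℤ)) * l / m) * ⟪B k j (x j), y k⟫ :=
          (Finset.mul_sum _ _ _).symm
      _ = (m:ℂ)⁻¹ * ∑ l ∈ Finset.range m, ∑ k ∈ G, ∑ j ∈ F,
            eθ (2 * Real.pi * (((j:ℤ) - (k:ℤ) - d : ℤ)) * l / m) * ⟪B k j (x j), y k⟫ := by
          rw [Finset.sum_comm]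
  rw [key]
  have hSl : ∀ l, ‖∑ k ∈ G, ∑ j ∈ F,
      eθ (2 * Real.pi * (((j:ℤ) - (k:ℤ) - d : ℤ)) * l / m) * ⟪B k j (x j), y k⟫‖
        ≤ D * Real.sqrt (∑ j ∈ F, ‖x j‖ ^ 2) * Real.sqrt (∑ k ∈ G, ‖y k‖ ^ 2) := by
    intro l
    set w : ℕ → ℂ := fun n => eθ (2 * Real.pi * n * l / m) with hw
    have hfac : ∑ k ∈ G, ∑ j ∈ F,
        eθ (2 * Real.pi * (((j:ℤ) - (k:ℤ) - d : ℤ)) * l / m) * ⟪B k j (x j), y k⟫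
        = eθ (2 * Real.pi * ((-d : ℤ) : ℝ) * l / m) * ∑ k ∈ G, ∑ j ∈ F,
            (w j * (w k)⁻¹) * ⟪B k j (x j), y k⟫ := by
      rw [Finset.mul_sum]
      refine Finset.sum_congr rfl fun k _ => ?_
      rw [Finset.mul_sum]
      refine Finset.sum_congr rfl fun j _ => ?_
      simp only [hw]
      rw [eθ_inv, ← eθ_add, ← mul_assoc, ← eθ_add]
      congr 2
      push_cast
      field_simp
      ring
    rw [hfac, norm_mul, norm_eθ, one_mul]
    exact sb_twist hB w (fun n => norm_eθ _) F G x y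
  calc ‖(m:ℂ)⁻¹ * ∑ l ∈ Finset.range m, ∑ k ∈ G, ∑ j ∈ F,
      eθ (2 * Real.pi * (((j:ℤ) - (k:ℤ) - d : ℤ)) * l / m) * ⟪B k j (x j), y k⟫‖
      = (m:ℝ)⁻¹ * ‖∑ l ∈ Finset.range m, ∑ k ∈ G, ∑ j ∈ F,
          eθ (2 * Real.pi * (((j:ℤ) - (k:ℤ) - d : ℤ)) * l / m) * ⟪B k j (x j), y k⟫‖ := by
        rw [norm_mul, norm_inv, Complex.norm_natCast]
    _ ≤ (m:ℝ)⁻¹ * ∑ l ∈ Finset.range m, ‖∑ k ∈ G, ∑ j ∈ F,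
          eθ (2 * Real.pi * (((j:ℤ) - (k:ℤ) - d : ℤ)) * l / m) * ⟪B k j (x j), y k⟫‖ := by
        refine mul_le_mul_of_nonneg_left (norm_sum_le _ _) (by positivity)
    _ ≤ (m:ℝ)⁻¹ * (m * (D * Real.sqrt (∑ j ∈ F, ‖x j‖ ^ 2) * Real.sqrt (∑ k ∈ G, ‖y k‖ ^ 2))) := by
        refine mul_le_mul_of_nonneg_left ?_ (by positivity)
        calc ∑ l ∈ Finset.range m, ‖∑ k ∈ G, ∑ j ∈ F,
            eθ (2 * Real.pi * (((j:ℤ) - (k:ℤ) - d : ℤ)) * l / m) * ⟪B k j (x j), y k⟫‖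
            ≤ ∑ _l ∈ Finset.range m, D * Real.sqrt (∑ j ∈ F, ‖x j‖ ^ 2) * Real.sqrt (∑ k ∈ G, ‖y k‖ ^ 2) :=
              Finset.sum_le_sum fun l _ => hSl l
          _ = m * (D * Real.sqrt (∑ j ∈ F, ‖x j‖ ^ 2) * Real.sqrt (∑ k ∈ G, ‖y k‖ ^ 2)) := by
              rw [Finset.sum_const, Finset.card_range, nsmul_eq_mul]
    _ = D * Real.sqrt (∑ j ∈ F, ‖x j‖ ^ 2) * Real.sqrt (∑ k ∈ G, ‖y k‖ ^ 2) := by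
        rw [← mul_assoc, inv_mul_cancel₀ hmr, one_mul]

end SchurAux

namespace SchurAux
set_option linter.unusedSectionVars false

local notation "⟪" x ", " y "⟫" => (inner ℂ x y : ℂ)

/-! ### Stability of `MlBoundedBy` -/

lemma ml_mono {A : ℕ → ℕ → (H →L[ℂ] H)} {C C' : ℝ} (h : MlBoundedBy A C) (hle : C ≤ C') :
    MlBoundedBy A C' :=
  fun B D hD hB => sb_mono (h B D hD hB) (mul_le_mul_of_nonneg_right hle hD)

lemma ml_zero : MlBoundedBy (fun (_ _ : ℕ) => (0 : H →L[ℂ] H)) 0 := by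
  intro B D _ _
  have he : schur (fun (_ _ : ℕ) => (0 : H →L[ℂ] H)) B = fun _ _ => (0 : H →L[ℂ] H) := by
    funext k j
    exact ContinuousLinearMap.zero_comp _
  rw [he, zero_mul]
  exact sb_zero

lemma ml_add {A A' : ℕ → ℕ → (H →L[ℂ] H)} {C C' : ℝ}
    (h : MlBoundedBy A C) (h' : MlBoundedBy A' C') :
    MlBoundedBy (fun k j => A k j + A' k j) (C + C') := by
  intro B D hD hB
  have he : schur (fun k j => A k j + A' k j) B = fun k j => schur A B k j + schur A' B k j := by
    funext k j
    exact ContinuousLinearMap.add_comp _ _ _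
  rw [he, add_mul]
  exact sb_add (h B D hD hB) (h' B D hD hB)

lemma ml_neg {A : ℕ → ℕ → (H →L[ℂ] H)} {C : ℝ} (h : MlBoundedBy A C) :
    MlBoundedBy (fun k j => -A k j) C := by
  intro B D hD hB
  have he : schur (fun k j => -A k j) B = fun k j => -(schur A B k j) := by
    funext k j
    exact ContinuousLinearMap.neg_comp _ _
  rw [he]
  exact sb_neg (h B D hD hB)

lemma ml_sub {A A' : ℕ → ℕ → (H →L[ℂ] H)} {C C' : ℝ}
    (h : MlBoundedBy A C) (h' : MlBoundedBy A' C') :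
    MlBoundedBy (fun k j => A k j - A' k j) (C + C') := by
  have := ml_add h (ml_neg h')
  simpa [sub_eq_add_neg] using this

/-- Modulation preserves the left multiplier bound. -/
lemma ml_mod {A : ℕ → ℕ → (H →L[ℂ] H)} {C : ℝ} (h : MlBoundedBy A C) (t : ℝ) :
    MlBoundedBy (modMatrix A t) C := by
  intro B D hD hB
  set w : ℕ → ℂ := fun n => eθ (n * t) with hw
  have he : schur (modMatrix A t) B = fun k j => (w j * (w k)⁻¹) • schur A B k j := by
    funext k j
    show (modMatrix A t k j).comp (B k j) = _
    rw [modMatrix_eq, ContinuousLinearMap.smul_comp]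
    congr 1
    simp only [hw]
    rw [eθ_inv, ← eθ_add]
    congr 1
    push_cast
    ring
  rw [he]
  exact sb_mod (h B D hD hB) w (fun n => norm_eθ _)

/-- A matrix supported on a single diagonal with small entries is a small left multiplier. -/
lemma ml_diag_small {Q : ℕ → ℕ → (H →L[ℂ] H)} {η : ℝ} (d : ℤ)
    (hsupp : ∀ k j : ℕ, (j:ℤ) - (k:ℤ) ≠ d → Q k j = 0)
    (hbd : ∀ k j, ‖Q k j‖ ≤ η) : MlBoundedBy Q η := by
  have hη : 0 ≤ η := le_trans (norm_nonneg _) (hbd 0 0)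
  intro B D hD hB
  intro F G x y
  classical
  set y' : ℕ → H := fun k => if h : (0:ℤ) ≤ (k:ℤ) + d then
      (ContinuousLinearMap.adjoint (Q k ((k:ℤ) + d).toNat)) (y k) else 0 with hy'
  have hterm : ∀ k ∈ G, ∀ j ∈ F, ⟪(schur Q B) k j (x j), y k⟫
      = ⟪(if (j:ℤ) - (k:ℤ) = d then B k j else 0 : H →L[ℂ] H) (x j), y' k⟫ := by
    intro k _ j _
    by_cases hd : (j:ℤ) - (k:ℤ) = d
    · rw [if_pos hd]
      have h0 : (0:ℤ) ≤ (k:ℤ) + d := by omega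
      have hjj : ((k:ℤ) + d).toNat = j := by omega
      simp only [hy', dif_pos h0, hjj]
      exact (ContinuousLinearMap.adjoint_inner_right (Q k j) (B k j (x j)) (y k)).symm
    · rw [if_neg hd]
      have h0 : Q k j = 0 := hsupp k j hd
      simp [schur, h0]
  have hy'bd : ∀ k, ‖y' k‖ ≤ η * ‖y k‖ := by
    intro k
    simp only [hy']
    split
    · calc ‖(ContinuousLinearMap.adjoint (Q k ((k:ℤ) + d).toNat)) (y k)‖
          ≤ ‖ContinuousLinearMap.adjoint (Q k ((k:ℤ) + d).toNat)‖ * ‖y k‖ :=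
            ContinuousLinearMap.le_opNorm _ _
        _ = ‖Q k ((k:ℤ) + d).toNat‖ * ‖y k‖ := by
            rw [ContinuousLinearMap.adjoint.norm_map]
        _ ≤ η * ‖y k‖ := mul_le_mul_of_nonneg_right (hbd _ _) (norm_nonneg _)
    · simp [mul_nonneg hη (norm_nonneg _)]
  have hsq : Real.sqrt (∑ k ∈ G, ‖y' k‖ ^ 2) ≤ η * Real.sqrt (∑ k ∈ G, ‖y k‖ ^ 2) := by
    calc Real.sqrt (∑ k ∈ G, ‖y' k‖ ^ 2) ≤ Real.sqrt (∑ k ∈ G, (η * ‖y k‖) ^ 2) := by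
          refine Real.sqrt_le_sqrt (Finset.sum_le_sum fun k _ => ?_)
          have := hy'bd k
          exact pow_le_pow_left₀ (norm_nonneg _) this 2
      _ = η * Real.sqrt (∑ k ∈ G, ‖y k‖ ^ 2) := by
          rw [show ∑ k ∈ G, (η * ‖y k‖) ^ 2 = η ^ 2 * ∑ k ∈ G, ‖y k‖ ^ 2 by
              rw [Finset.mul_sum]; exact Finset.sum_congr rfl fun k _ => by ring,
            Real.sqrt_mul (sq_nonneg η), Real.sqrt_sq hη]
  calc ‖∑ k ∈ G, ∑ j ∈ F, ⟪(schur Q B) k j (x j), y k⟫‖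
      = ‖∑ k ∈ G, ∑ j ∈ F, ⟪(if (j:ℤ) - (k:ℤ) = d then B k j else 0 : H →L[ℂ] H) (x j), y' k⟫‖ := by
        congr 1
        exact Finset.sum_congr rfl fun k hk => Finset.sum_congr rfl fun j hj => hterm k hk j hj
    _ ≤ D * Real.sqrt (∑ j ∈ F, ‖x j‖ ^ 2) * Real.sqrt (∑ k ∈ G, ‖y' k‖ ^ 2) :=
        sb_diag hB d F G x y'
    _ ≤ D * Real.sqrt (∑ j ∈ F, ‖x j‖ ^ 2) * (η * Real.sqrt (∑ k ∈ G, ‖y k‖ ^ 2)) :=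
        mul_le_mul_of_nonneg_left hsq (by positivity)
    _ = η * D * Real.sqrt (∑ j ∈ F, ‖x j‖ ^ 2) * Real.sqrt (∑ k ∈ G, ‖y k‖ ^ 2) := by ring

/-- A finite sum of uniformly bounded left multipliers. -/
lemma ml_sum {ι : Type} (s : Finset ι) (M : ι → ℕ → ℕ → (H →L[ℂ] H)) (η : ℝ)
    (h : ∀ i ∈ s, MlBoundedBy (M i) η) :
    MlBoundedBy (fun k j => ∑ i ∈ s, M i k j) ((s.card : ℝ) * η) := by
  classical
  induction s using Finset.induction_on with
  | empty => simpa using ml_zero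
  | @insert a s ha ih =>
    have h1 : MlBoundedBy (fun k j => M a k j + ∑ i ∈ s, M i k j) (η + (s.card : ℝ) * η) :=
      ml_add (h a (Finset.mem_insert_self a s)) (ih fun i hi => h i (Finset.mem_insert_of_mem hi))
    have he : (fun k j => M a k j + ∑ i ∈ s, M i k j) = fun k j => ∑ i ∈ insert a s, M i k j := by
      funext k j
      rw [Finset.sum_insert ha]
    rw [he] at h1
    have hc : ((insert a s).card : ℝ) * η = η + (s.card : ℝ) * η := by
      rw [Finset.card_insert_of_notMem ha]
      push_cast
      ring
    rw [hc]
    exact h1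

/-- A band matrix with small entries is a small left multiplier. -/
lemma ml_band {Q : ℕ → ℕ → (H →L[ℂ] H)} {η : ℝ} (N : ℕ)
    (hsupp : ∀ k j : ℕ, N < ((j:ℤ) - (k:ℤ)).natAbs → Q k j = 0)
    (hbd : ∀ k j, ‖Q k j‖ ≤ η) :
    MlBoundedBy Q (((Finset.Icc (-(N:ℤ)) (N:ℤ)).card : ℝ) * η) := by
  classical
  have hη : 0 ≤ η := le_trans (norm_nonneg _) (hbd 0 0)
  have hQ : Q = fun (k j : ℕ) => ∑ d ∈ Finset.Icc (-(N:ℤ)) (N:ℤ),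
      (if (j:ℤ) - (k:ℤ) = d then Q k j else 0) := by
    funext k j
    rw [Finset.sum_ite_eq]
    by_cases hmem : ((j:ℤ) - (k:ℤ)) ∈ Finset.Icc (-(N:ℤ)) (N:ℤ)
    · rw [if_pos hmem]
    · rw [if_neg hmem]
      rw [Finset.mem_Icc] at hmem
      exact hsupp k j (by omega)
  rw [hQ]
  refine ml_sum _ _ η (fun d _ => ml_diag_small d (fun k j hne => if_neg hne) (fun k j => ?_))
  by_cases hc : (j:ℤ) - (k:ℤ) = d
  · rw [if_pos hc]; exact hbd k j
  · rw [if_neg hc]; simpa using hη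

end SchurAux

namespace SchurAux
set_option linter.unusedSectionVars false

local notation "⟪" x ", " y "⟫" => (inner ℂ x y : ℂ)

/-- Entries of a bounded left multiplier are bounded. -/
lemma ml_entry_bound {A : ℕ → ℕ → (H →L[ℂ] H)} {C : ℝ} (hC : 0 ≤ C) (h : MlBoundedBy A C)
    (k j : ℕ) : ‖A k j‖ ≤ C := by
  classical
  set B : ℕ → ℕ → (H →L[ℂ] H) :=
    fun k' j' => if j = j' then (if k = k' then ContinuousLinearMap.id ℂ H else 0) else 0 with hBdef
  have hB : SchurBoundedBy B 1 := by
    intro F G x y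
    have hterm : ∀ k' j', ⟪B k' j' (x j'), y k'⟫
        = if j = j' then (if k = k' then ⟪x j', y k'⟫ else 0) else 0 := by
      intro k' j'
      simp only [hBdef]
      by_cases h1 : j = j' <;> by_cases h2 : k = k' <;>
        simp [h1, h2]
    have hsum : ∑ k' ∈ G, ∑ j' ∈ F, ⟪B k' j' (x j'), y k'⟫
        = if j ∈ F then (if k ∈ G then ⟪x j, y k⟫ else 0) else 0 := by
      calc ∑ k' ∈ G, ∑ j' ∈ F, ⟪B k' j' (x j'), y k'⟫
          = ∑ k' ∈ G, (if j ∈ F then (if k = k' then ⟪x j, y k'⟫ else 0) else 0) := by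
            refine Finset.sum_congr rfl fun k' _ => ?_
            rw [show (∑ j' ∈ F, ⟪B k' j' (x j'), y k'⟫)
                = ∑ j' ∈ F, if j = j' then (if k = k' then ⟪x j', y k'⟫ else 0) else 0 from
              Finset.sum_congr rfl fun j' _ => hterm k' j']
            rw [Finset.sum_ite_eq]
        _ = if j ∈ F then (if k ∈ G then ⟪x j, y k⟫ else 0) else 0 := by
            by_cases hjF : j ∈ F
            · simp only [hjF, if_true]
              rw [Finset.sum_ite_eq]
            · simp [hjF]
    rw [hsum]
    by_cases hjF : j ∈ F
    · by_cases hkG : k ∈ G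
      · simp only [hjF, hkG, if_true]
        calc ‖⟪x j, y k⟫‖ ≤ ‖x j‖ * ‖y k‖ := norm_inner_le_norm _ _
          _ ≤ Real.sqrt (∑ j' ∈ F, ‖x j'‖ ^ 2) * Real.sqrt (∑ k' ∈ G, ‖y k'‖ ^ 2) := by
              refine mul_le_mul ?_ ?_ (norm_nonneg _) (Real.sqrt_nonneg _)
              · rw [show ‖x j‖ = Real.sqrt (‖x j‖ ^ 2) from (Real.sqrt_sq (norm_nonneg _)).symm]
                exact Real.sqrt_le_sqrt (Finset.single_le_sum (fun i _ => sq_nonneg ‖x i‖) hjF)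
              · rw [show ‖y k‖ = Real.sqrt (‖y k‖ ^ 2) from (Real.sqrt_sq (norm_nonneg _)).symm]
                exact Real.sqrt_le_sqrt (Finset.single_le_sum (fun i _ => sq_nonneg ‖y i‖) hkG)
          _ = 1 * Real.sqrt (∑ j' ∈ F, ‖x j'‖ ^ 2) * Real.sqrt (∑ k' ∈ G, ‖y k'‖ ^ 2) := by ring
      · simp only [hjF, hkG, if_true, if_false]
        have := sqrts_nonneg (H := H) F G x y
        simp only [norm_zero]
        nlinarith [Real.sqrt_nonneg (∑ j' ∈ F, ‖x j'‖ ^ 2), Real.sqrt_nonneg (∑ k' ∈ G, ‖y k'‖ ^ 2)]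
    · simp only [hjF, if_false]
      simp only [norm_zero]
      nlinarith [Real.sqrt_nonneg (∑ j' ∈ F, ‖x j'‖ ^ 2), Real.sqrt_nonneg (∑ k' ∈ G, ‖y k'‖ ^ 2)]
  have h2 := h B 1 zero_le_one hB
  have key : ∀ v u : H, ‖⟪A k j v, u⟫‖ ≤ C * ‖v‖ * ‖u‖ := by
    intro v u
    have h3 := h2 {j} {k} (fun _ => v) (fun _ => u)
    simp only [Finset.sum_singleton] at h3
    have hBkj : B k j = ContinuousLinearMap.id ℂ H := by simp [hBdef]
    have hsch : (schur A B) k j (v) = A k j v := by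
      simp [schur, hBkj]
    rw [hsch] at h3
    calc ‖⟪A k j v, u⟫‖ ≤ C * 1 * Real.sqrt (‖v‖ ^ 2) * Real.sqrt (‖u‖ ^ 2) := h3
      _ = C * ‖v‖ * ‖u‖ := by
          rw [Real.sqrt_sq (norm_nonneg _), Real.sqrt_sq (norm_nonneg _)]; ring
  refine ContinuousLinearMap.opNorm_le_bound _ hC fun v => ?_
  have h4 := key v (A k j v)
  have h5 : ‖(⟪A k j v, A k j v⟫)‖ = ‖A k j v‖ ^ 2 := by
    rw [inner_self_eq_norm_sq_to_K (𝕜 := ℂ)]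
    simp [norm_pow]
  rw [h5] at h4
  by_cases hz : ‖A k j v‖ = 0
  · rw [hz]
    positivity
  · have hzpos : 0 < ‖A k j v‖ := lt_of_le_of_ne (norm_nonneg _) (Ne.symm hz)
    nlinarith
end SchurAux

namespace SchurAux
set_option linter.unusedSectionVars false

/-! ### The Fejér kernel -/

def fejK (n : ℕ) (t : ℝ) : ℝ :=
  ((n:ℝ)+1)⁻¹ * Complex.normSq (∑ r ∈ Finset.range (n+1), eθ (r * t))

lemma fejK_nonneg (n : ℕ) (t : ℝ) : 0 ≤ fejK n t :=
  mul_nonneg (by positivity) (Complex.normSq_nonneg _)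

lemma fejK_expand (n : ℕ) (t : ℝ) :
    ((fejK n t : ℝ) : ℂ) = (((n:ℝ)+1)⁻¹ : ℝ) *
      ∑ r ∈ Finset.range (n+1), ∑ r' ∈ Finset.range (n+1), eθ (((r:ℝ) - (r':ℝ)) * t) := by
  have hconj : (starRingEnd ℂ) (∑ r' ∈ Finset.range (n+1), eθ (r' * t))
      = ∑ r' ∈ Finset.range (n+1), eθ (-((r':ℝ) * t)) := by
    rw [map_sum]
    exact Finset.sum_congr rfl fun r' _ => conj_eθ _
  have h1 : ((Complex.normSq (∑ r ∈ Finset.range (n+1), eθ (r * t)) : ℝ) : ℂ)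
      = ∑ r ∈ Finset.range (n+1), ∑ r' ∈ Finset.range (n+1), eθ (((r:ℝ) - (r':ℝ)) * t) := by
    rw [← Complex.mul_conj, hconj, Finset.sum_mul_sum]
    refine Finset.sum_congr rfl fun r _ => Finset.sum_congr rfl fun r' _ => ?_
    rw [← eθ_add]
    congr 1
    ring
  rw [fejK, Complex.ofReal_mul, h1]

/-- The Fejér coefficients. -/
def fcoefC (n : ℕ) (d : ℤ) : ℂ :=
  (((n:ℝ)+1)⁻¹ : ℝ) * ∑ r ∈ Finset.range (n+1), ∑ r' ∈ Finset.range (n+1),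
    (if (r':ℤ) - (r:ℤ) = d then 1 else 0)

lemma fcoefC_conj (n : ℕ) (d : ℤ) : (starRingEnd ℂ) (fcoefC n d) = fcoefC n d := by
  simp [fcoefC, map_mul, map_sum, apply_ite (starRingEnd ℂ), Complex.conj_ofReal]

lemma fcoefC_zero (n : ℕ) : fcoefC n 0 = 1 := by
  rw [fcoefC]
  have hrow : ∀ r ∈ Finset.range (n+1),
      ∑ r' ∈ Finset.range (n+1), (if (r':ℤ) - (r:ℤ) = 0 then (1:ℂ) else 0) = 1 := by
    intro r hr
    rw [Finset.sum_eq_single r]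
    · simp
    · intro b _ hb
      rw [if_neg (by omega)]
    · intro hnotin
      exact absurd hr hnotin
  rw [Finset.sum_congr rfl hrow, Finset.sum_const, Finset.card_range, nsmul_eq_mul, mul_one]
  have : ((n:ℝ)+1) ≠ 0 := by positivity
  rw [show ((n+1 : ℕ):ℂ) = (((n:ℝ)+1 : ℝ) : ℂ) by push_cast; ring]
  rw [← Complex.ofReal_mul, inv_mul_cancel₀ this]
  simp

lemma norm_fcoefC_le (n : ℕ) (d : ℤ) : ‖fcoefC n d‖ ≤ (n:ℝ)+1 := by
  rw [fcoefC]
  have h1 : ‖∑ r ∈ Finset.range (n+1), ∑ r' ∈ Finset.range (n+1),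
      (if (r':ℤ) - (r:ℤ) = d then (1:ℂ) else 0)‖ ≤ ((n:ℝ)+1)^2 := by
    calc ‖∑ r ∈ Finset.range (n+1), ∑ r' ∈ Finset.range (n+1),
        (if (r':ℤ) - (r:ℤ) = d then (1:ℂ) else 0)‖
        ≤ ∑ r ∈ Finset.range (n+1), ‖∑ r' ∈ Finset.range (n+1),
            (if (r':ℤ) - (r:ℤ) = d then (1:ℂ) else 0)‖ := norm_sum_le _ _
      _ ≤ ∑ r ∈ Finset.range (n+1), ∑ r' ∈ Finset.range (n+1),
            ‖(if (r':ℤ) - (r:ℤ) = d then (1:ℂ) else 0)‖ :=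
          Finset.sum_le_sum fun r _ => norm_sum_le _ _
      _ ≤ ∑ _r ∈ Finset.range (n+1), ∑ _r' ∈ Finset.range (n+1), 1 := by
          refine Finset.sum_le_sum fun r _ => Finset.sum_le_sum fun r' _ => ?_
          split <;> simp
      _ = ((n:ℝ)+1)^2 := by
          simp [Finset.sum_const, Finset.card_range]
          push_cast
          ring
  rw [norm_mul]
  have h2 : ‖((((n:ℝ)+1)⁻¹ : ℝ) : ℂ)‖ = ((n:ℝ)+1)⁻¹ := by
    rw [Complex.norm_real]
    rw [Real.norm_eq_abs, abs_of_nonneg (by positivity)]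
  rw [h2]
  calc ((n:ℝ)+1)⁻¹ * ‖∑ r ∈ Finset.range (n+1), ∑ r' ∈ Finset.range (n+1),
      (if (r':ℤ) - (r:ℤ) = d then (1:ℂ) else 0)‖
      ≤ ((n:ℝ)+1)⁻¹ * ((n:ℝ)+1)^2 := mul_le_mul_of_nonneg_left h1 (by positivity)
    _ = (n:ℝ)+1 := by
        field_simp

lemma fcoefC_support (n : ℕ) (d : ℤ) (hd : (n:ℤ) < |d|) : fcoefC n d = 0 := by
  rw [fcoefC]
  have : ∀ r ∈ Finset.range (n+1), ∑ r' ∈ Finset.range (n+1),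
      (if (r':ℤ) - (r:ℤ) = d then (1:ℂ) else 0) = 0 := by
    intro r hr
    refine Finset.sum_eq_zero fun r' hr' => ?_
    rw [Finset.mem_range] at hr hr'
    have h2 := lt_abs.mp hd
    rw [if_neg (by omega)]
  rw [Finset.sum_congr rfl this, Finset.sum_const_zero, mul_zero]

set_option maxHeartbeats 1000000 in
/-- Averaging the modulated Fejér kernel over roots of unity gives the Fejér coefficients. -/
lemma fejer_avg (n R : ℕ) (d : ℤ) (hd : d.natAbs ≤ R) :
    ((n+R+1 : ℕ) : ℂ)⁻¹ * ∑ l ∈ Finset.range (n+R+1),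
        ((fejK n (2*Real.pi*l/(n+R+1 : ℕ)) : ℝ) : ℂ) * eθ ((d:ℝ) * (2*Real.pi*l/(n+R+1 : ℕ)))
      = fcoefC n d := by
  set m : ℕ := n + R + 1 with hm
  have hm0 : 0 < m := by omega
  have hmr : (m:ℝ) ≠ 0 := Nat.cast_ne_zero.2 hm0.ne'
  have hmc : (m:ℂ) ≠ 0 := by exact_mod_cast hmr
  set c : ℂ := ((((n:ℝ)+1)⁻¹ : ℝ) : ℂ) with hcdef
  set E : ℕ → ℕ → ℕ → ℂ :=
    fun l r r' => eθ (2*Real.pi*(((r:ℤ) - (r':ℤ) + d : ℤ)) * l / m) with hE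
  have hl : ∀ l : ℕ, ((fejK n (2*Real.pi*l/m) : ℝ) : ℂ) * eθ ((d:ℝ) * (2*Real.pi*l/m))
      = c * ∑ r ∈ Finset.range (n+1), ∑ r' ∈ Finset.range (n+1), E l r r' := by
    intro l
    rw [fejK_expand, mul_assoc]
    congr 1
    rw [Finset.sum_mul]
    refine Finset.sum_congr rfl fun r _ => ?_
    rw [Finset.sum_mul]
    refine Finset.sum_congr rfl fun r' _ => ?_
    simp only [hE]
    rw [← eθ_add]
    congr 1
    push_cast
    field_simp
  have hdelta : ∀ r ∈ Finset.range (n+1), ∀ r' ∈ Finset.range (n+1),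
      (m:ℂ)⁻¹ * ∑ l ∈ Finset.range m, E l r r'
        = (if (r':ℤ) - (r:ℤ) = d then 1 else 0) := by
    intro r hr r' hr'
    rw [Finset.mem_range] at hr hr'
    simp only [hE]
    rw [delta_sum m hm0]
    by_cases hz : (r:ℤ) - (r':ℤ) + d = 0
    · rw [if_pos (by rw [hz]; exact dvd_zero _), if_pos (by omega)]
      field_simp
    · have hnd : ¬ ((m:ℤ) ∣ ((r:ℤ) - (r':ℤ) + d)) := by
        intro hdvd
        have h1 : (m:ℤ) ≤ |(r:ℤ) - (r':ℤ) + d| :=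
          Int.le_of_dvd (abs_pos.mpr hz) ((dvd_abs _ _).mpr hdvd)
        rw [Int.abs_eq_natAbs] at h1
        omega
      rw [if_neg hnd, if_neg (by omega)]
      simp
  have h1 : ∑ l ∈ Finset.range m, ((fejK n (2*Real.pi*l/m) : ℝ) : ℂ) * eθ ((d:ℝ) * (2*Real.pi*l/m))
      = c * ∑ r ∈ Finset.range (n+1), ∑ r' ∈ Finset.range (n+1), ∑ l ∈ Finset.range m, E l r r' := by
    rw [show (∑ l ∈ Finset.range m, ((fejK n (2*Real.pi*l/m) : ℝ) : ℂ) * eθ ((d:ℝ) * (2*Real.pi*l/m)))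
        = ∑ l ∈ Finset.range m, (c * ∑ r ∈ Finset.range (n+1), ∑ r' ∈ Finset.range (n+1), E l r r')
      from Finset.sum_congr rfl fun l _ => hl l]
    rw [← Finset.mul_sum]
    congr 1
    rw [Finset.sum_comm]
    exact Finset.sum_congr rfl fun r _ => Finset.sum_comm
  have h2 : ∑ r ∈ Finset.range (n+1), ∑ r' ∈ Finset.range (n+1),
        ((m:ℂ)⁻¹ * ∑ l ∈ Finset.range m, E l r r')
      = ∑ r ∈ Finset.range (n+1), ∑ r' ∈ Finset.range (n+1),
          (if (r':ℤ) - (r:ℤ) = d then (1:ℂ) else 0) :=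
    Finset.sum_congr rfl fun r hr => Finset.sum_congr rfl fun r' hr' => hdelta r hr r' hr'
  have h3 : ∑ r ∈ Finset.range (n+1), ∑ r' ∈ Finset.range (n+1),
        ((m:ℂ)⁻¹ * ∑ l ∈ Finset.range m, E l r r')
      = (m:ℂ)⁻¹ * ∑ r ∈ Finset.range (n+1), ∑ r' ∈ Finset.range (n+1),
          ∑ l ∈ Finset.range m, E l r r' := by
    rw [Finset.mul_sum]
    exact Finset.sum_congr rfl fun r _ => (Finset.mul_sum _ _ _).symm
  rw [h1, fcoefC, ← h2, h3]
  ring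

/-- Decay of the Fejér kernel away from `0 (mod 2π)`. -/
lemma fejK_le (n : ℕ) {t c : ℝ} (hc : 0 < c) (h : c ≤ ‖eθ t - 1‖) :
    fejK n t ≤ ((n:ℝ)+1)⁻¹ * 4 / c^2 := by
  have hne : eθ t ≠ 1 := by
    intro h1
    rw [h1, sub_self, norm_zero] at h
    linarith
  have hsum : ∑ r ∈ Finset.range (n+1), eθ ((r:ℝ) * t) = (eθ t ^ (n+1) - 1)/(eθ t - 1) := by
    rw [Finset.sum_congr rfl fun r _ => (eθ_nat_pow t r).symm]
    exact geom_sum_eq hne (n+1)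
  have hS : ‖∑ r ∈ Finset.range (n+1), eθ ((r:ℝ) * t)‖ ≤ 2 / c := by
    rw [hsum, norm_div]
    refine div_le_div₀ (by norm_num) ?_ hc h
    calc ‖eθ t ^ (n+1) - 1‖ ≤ ‖eθ t ^ (n+1)‖ + ‖(1:ℂ)‖ := norm_sub_le _ _
      _ = 2 := by rw [norm_pow, norm_eθ, one_pow, norm_one]; norm_num
  have hnsq : Complex.normSq (∑ r ∈ Finset.range (n+1), eθ ((r:ℝ) * t)) ≤ (2/c)^2 := by
    rw [← Complex.sq_norm]
    have : ‖∑ r ∈ Finset.range (n+1), eθ ((r:ℝ) * t)‖ ≤ 2/c := hS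
    nlinarith [norm_nonneg (∑ r ∈ Finset.range (n+1), eθ ((r:ℝ) * t))]
  rw [fejK]
  calc ((n:ℝ)+1)⁻¹ * Complex.normSq (∑ r ∈ Finset.range (n+1), eθ (r * t))
      ≤ ((n:ℝ)+1)⁻¹ * (2/c)^2 := mul_le_mul_of_nonneg_left hnsq (by positivity)
    _ = ((n:ℝ)+1)⁻¹ * 4 / c^2 := by
        field_simp
        ring

end SchurAux

namespace SchurAux
set_option linter.unusedSectionVars false

local notation "⟪" x ", " y "⟫" => (inner ℂ x y : ℂ)

lemma modMatrix_period (A : ℕ → ℕ → (H →L[ℂ] H)) (s : ℝ) (q : ℤ) :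
    modMatrix A (s + 2*Real.pi*q) = modMatrix A s := by
  funext k j
  rw [modMatrix_eq, modMatrix_eq]
  congr 1
  have h : ((j:ℤ) - (k:ℤ) : ℝ) * (s + 2*Real.pi*q)
      = ((j:ℤ) - (k:ℤ) : ℝ) * s + 2*Real.pi*((((j:ℤ)-(k:ℤ))*q : ℤ) : ℝ) := by
    push_cast; ring
  rw [h, eθ_add, eθ_int_two_pi, mul_one]

lemma exists_lb {δ' : ℝ} (h0 : 0 < δ') (h1 : δ' ≤ 1) :
    ∃ cc : ℝ, 0 < cc ∧ ∀ u : ℝ, δ' ≤ u → u ≤ 2*Real.pi - δ' → cc ≤ ‖eθ u - 1‖ := by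
  have hπ := Real.pi_gt_three
  have hne : Set.Nonempty (Set.Icc δ' (2*Real.pi - δ')) := ⟨δ', le_refl _, by nlinarith⟩
  have hcont : ContinuousOn (fun u : ℝ => ‖eθ u - 1‖) (Set.Icc δ' (2*Real.pi - δ')) := by
    apply Continuous.continuousOn
    have : Continuous (fun u : ℝ => eθ u) := by
      unfold eθ
      fun_prop
    fun_prop
  obtain ⟨u0, hu0mem, hu0min⟩ := isCompact_Icc.exists_isMinOn hne hcont
  refine ⟨‖eθ u0 - 1‖, ?_, fun u hu1 hu2 => hu0min (Set.mem_Icc.mpr ⟨hu1, hu2⟩)⟩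
  rw [norm_pos_iff, sub_ne_zero]
  intro hh
  rw [eθ, Complex.exp_eq_one_iff] at hh
  obtain ⟨q, hq⟩ := hh
  have h' : ((u0 : ℝ):ℂ) * Complex.I = ((2*Real.pi*(q:ℝ) : ℝ):ℂ) * Complex.I := by
    rw [hq]; push_cast; ring
  have hu0 : u0 = 2*Real.pi*(q:ℝ) := by
    have := mul_right_cancel₀ Complex.I_ne_zero h'
    exact_mod_cast this
  obtain ⟨hm1, hm2⟩ := Set.mem_Icc.mp hu0mem
  rcases le_or_gt q 0 with hq0 | hq0
  · have hqr : (q:ℝ) ≤ 0 := by exact_mod_cast hq0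
    nlinarith
  · have hqr : (1:ℝ) ≤ (q:ℝ) := by exact_mod_cast hq0
    nlinarith

set_option maxHeartbeats 2000000 in
/-- The key Fejér-approximation estimate. -/
lemma main_estimate (A : ℕ → ℕ → (H →L[ℂ] H)) (n : ℕ) (ε Cu δ' cc : ℝ)
    (hε : 0 < ε) (hCu0 : 0 ≤ Cu) (hδ'pos : 0 < δ')
    (hnear : ∀ s : ℝ, |s| < δ' → MlBoundedBy (fun k j => A k j - modMatrix A s k j) (ε/2))
    (hfar : ∀ s : ℝ, MlBoundedBy (fun k j => A k j - modMatrix A s k j) Cu)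
    (hccpos : 0 < cc) (hcc : ∀ u : ℝ, δ' ≤ u → u ≤ 2*Real.pi - δ' → cc ≤ ‖eθ u - 1‖)
    (hn : ((n:ℝ)+1)⁻¹ * 4 / cc^2 * Cu ≤ ε/2) :
    MlBoundedBy (fun k j => A k j - fcoefC n ((j:ℤ)-(k:ℤ)) • A k j) ε := by
  intro B D hD hB
  intro F G x y
  have hπ := Real.pi_gt_three
  set R : ℕ := F.sup id + G.sup id with hR
  set m : ℕ := n + R + 1 with hm
  have hm0 : 0 < m := by omega
  have hmr : (0:ℝ) < (m:ℝ) := by exact_mod_cast hm0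
  have hmc : (m:ℂ) ≠ 0 := by exact_mod_cast hmr.ne'
  set φ : ℕ → ℕ → ℂ := fun k j => ⟪A k j (B k j (x j)), y k⟫ with hφ
  set W : ℝ := D * Real.sqrt (∑ j ∈ F, ‖x j‖ ^ 2) * Real.sqrt (∑ k ∈ G, ‖y k‖ ^ 2) with hW
  have hW0 : 0 ≤ W := by
    rw [hW]
    have := sqrts_nonneg (H := H) F G x y
    nlinarith
  set κ : ℝ := ((n:ℝ)+1)⁻¹ * 4 / cc^2 with hκ
  have hκ0 : 0 ≤ κ := by rw [hκ]; positivity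
  -- the constant-coefficient identity
  have h0 := fejer_avg n R 0 (by simp)
  rw [← hm, fcoefC_zero] at h0
  simp only [Int.cast_zero, zero_mul, eθ_zero, mul_one] at h0
  have h0' : ∑ l ∈ Finset.range m, ((fejK n (2*Real.pi*l/m) : ℝ) : ℂ) = (m:ℂ) := by
    field_simp at h0
    exact_mod_cast h0
  have hKsum : ∑ l ∈ Finset.range m, fejK n (2*Real.pi*l/m) = (m:ℝ) := by
    have : ((∑ l ∈ Finset.range m, fejK n (2*Real.pi*l/m) : ℝ) : ℂ) = ((m:ℝ) : ℂ) := by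
      push_cast
      exact_mod_cast h0'
    exact_mod_cast this
  -- coefficient identity
  have hcoe : ∀ k ∈ G, ∀ j ∈ F,
      1 - fcoefC n ((j:ℤ)-(k:ℤ)) = (m:ℂ)⁻¹ * ∑ l ∈ Finset.range m,
        ((fejK n (2*Real.pi*l/m) : ℝ) : ℂ) * (1 - eθ (((j:ℝ)-(k:ℝ)) * (2*Real.pi*l/m))) := by
    intro k hk j hj
    have hj' : j ≤ F.sup id := Finset.le_sup (f := id) hj
    have hk' : k ≤ G.sup id := Finset.le_sup (f := id) hk
    have hd := fejer_avg n R ((j:ℤ)-(k:ℤ)) (by omega)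
    rw [← hm] at hd
    push_cast at hd
    have hmR : ((m:ℕ):ℝ) = (n:ℝ)+(R:ℝ)+1 := by rw [hm]; push_cast; ring
    have hmC : ((m:ℕ):ℂ) = (n:ℂ)+(R:ℂ)+1 := by rw [hm]; push_cast; ring
    calc 1 - fcoefC n ((j:ℤ)-(k:ℤ))
        = ((m:ℂ)⁻¹ * ∑ l ∈ Finset.range m, ((fejK n (2*Real.pi*l/m) : ℝ) : ℂ))
          - (m:ℂ)⁻¹ * ∑ l ∈ Finset.range m, ((fejK n (2*Real.pi*l/m) : ℝ) : ℂ) *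
              eθ (((j:ℝ)-(k:ℝ)) * (2*Real.pi*l/m)) := by
          rw [h0, hd]
      _ = (m:ℂ)⁻¹ * ∑ l ∈ Finset.range m,
            ((fejK n (2*Real.pi*l/m) : ℝ) : ℂ) * (1 - eθ (((j:ℝ)-(k:ℝ)) * (2*Real.pi*l/m))) := by
          rw [← mul_sub, ← Finset.sum_sub_distrib]
          congr 1
          refine Finset.sum_congr rfl fun l _ => ?_
          ring
  -- the bilinear form termwise
  have hA1 : ∀ k ∈ G, ∀ j ∈ F,
      ⟪(schur (fun k j => A k j - fcoefC n ((j:ℤ)-(k:ℤ)) • A k j) B) k j (x j), y k⟫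
        = (1 - fcoefC n ((j:ℤ)-(k:ℤ))) * φ k j := by
    intro k _ j _
    show ⟪((A k j - fcoefC n ((j:ℤ)-(k:ℤ)) • A k j).comp (B k j)) (x j), y k⟫ = _
    rw [ContinuousLinearMap.comp_apply, ContinuousLinearMap.sub_apply,
      ContinuousLinearMap.smul_apply, inner_sub_left, inner_smul_left, fcoefC_conj]
    simp only [hφ]
    ring
  set Ψ : ℕ → ℂ := fun l => ∑ k ∈ G, ∑ j ∈ F,
      (1 - eθ (((j:ℝ)-(k:ℝ)) * (2*Real.pi*l/m))) * φ k j with hΨ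
  -- the total sum
  have hΦ : ∑ k ∈ G, ∑ j ∈ F,
      ⟪(schur (fun k j => A k j - fcoefC n ((j:ℤ)-(k:ℤ)) • A k j) B) k j (x j), y k⟫
        = (m:ℂ)⁻¹ * ∑ l ∈ Finset.range m, ((fejK n (2*Real.pi*l/m) : ℝ) : ℂ) * Ψ l := by
    calc ∑ k ∈ G, ∑ j ∈ F,
        ⟪(schur (fun k j => A k j - fcoefC n ((j:ℤ)-(k:ℤ)) • A k j) B) k j (x j), y k⟫
        = ∑ k ∈ G, ∑ j ∈ F, (m:ℂ)⁻¹ * ∑ l ∈ Finset.range m,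
            ((fejK n (2*Real.pi*l/m) : ℝ) : ℂ) *
              ((1 - eθ (((j:ℝ)-(k:ℝ)) * (2*Real.pi*l/m))) * φ k j) := by
          refine Finset.sum_congr rfl fun k hk => Finset.sum_congr rfl fun j hj => ?_
          rw [hA1 k hk j hj, hcoe k hk j hj, mul_assoc]
          congr 1
          rw [Finset.sum_mul]
          exact Finset.sum_congr rfl fun l _ => by ring
      _ = (m:ℂ)⁻¹ * ∑ k ∈ G, ∑ j ∈ F, ∑ l ∈ Finset.range m,
            ((fejK n (2*Real.pi*l/m) : ℝ) : ℂ) *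
              ((1 - eθ (((j:ℝ)-(k:ℝ)) * (2*Real.pi*l/m))) * φ k j) := by
          rw [Finset.mul_sum]
          refine Finset.sum_congr rfl fun k _ => ?_
          rw [Finset.mul_sum]
      _ = (m:ℂ)⁻¹ * ∑ l ∈ Finset.range m, ((fejK n (2*Real.pi*l/m) : ℝ) : ℂ) * Ψ l := by
          congr 1
          calc ∑ k ∈ G, ∑ j ∈ F, ∑ l ∈ Finset.range m,
              ((fejK n (2*Real.pi*l/m) : ℝ) : ℂ) *
                ((1 - eθ (((j:ℝ)-(k:ℝ)) * (2*Real.pi*l/m))) * φ k j)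
              = ∑ k ∈ G, ∑ l ∈ Finset.range m, ∑ j ∈ F,
                  ((fejK n (2*Real.pi*l/m) : ℝ) : ℂ) *
                    ((1 - eθ (((j:ℝ)-(k:ℝ)) * (2*Real.pi*l/m))) * φ k j) :=
                Finset.sum_congr rfl fun k _ => Finset.sum_comm
            _ = ∑ l ∈ Finset.range m, ∑ k ∈ G, ∑ j ∈ F,
                  ((fejK n (2*Real.pi*l/m) : ℝ) : ℂ) *
                    ((1 - eθ (((j:ℝ)-(k:ℝ)) * (2*Real.pi*l/m))) * φ k j) := Finset.sum_comm
            _ = ∑ l ∈ Finset.range m, ((fejK n (2*Real.pi*l/m) : ℝ) : ℂ) * Ψ l := by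
                refine Finset.sum_congr rfl fun l _ => ?_
                simp only [hΨ]
                conv_rhs => rw [Finset.mul_sum]
                refine Finset.sum_congr rfl fun k _ => ?_
                rw [Finset.mul_sum]
  -- bound on each Ψ l
  have hΨbound : ∀ l ∈ Finset.range m,
      ((fejK n (2*Real.pi*l/m)) * ‖Ψ l‖ : ℝ)
        ≤ fejK n (2*Real.pi*l/m) * (ε/2 * W) + κ * (Cu * W) := by
    intro l hl
    rw [Finset.mem_range] at hl
    have htl0 : (0:ℝ) ≤ 2*Real.pi*l/m := by positivity
    have htl2 : 2*Real.pi*l/m < 2*Real.pi := by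
      rw [div_lt_iff₀ hmr]
      have hlm : (l:ℝ) < (m:ℝ) := by exact_mod_cast hl
      nlinarith
    have hform : Ψ l = ∑ k ∈ G, ∑ j ∈ F,
        ⟪(schur (fun k j => A k j - modMatrix A (-(2*Real.pi*l/m)) k j) B) k j (x j), y k⟫ := by
      simp only [hΨ]
      refine Finset.sum_congr rfl fun k _ => Finset.sum_congr rfl fun j _ => ?_
      show _ = ⟪((A k j - modMatrix A (-(2*Real.pi*l/m)) k j).comp (B k j)) (x j), y k⟫
      rw [modMatrix_eq, ContinuousLinearMap.comp_apply, ContinuousLinearMap.sub_apply,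
        ContinuousLinearMap.smul_apply, inner_sub_left, inner_smul_left, conj_eθ]
      simp only [hφ]
      push_cast
      ring_nf
    by_cases hfl : δ' ≤ 2*Real.pi*l/m ∧ 2*Real.pi*l/m ≤ 2*Real.pi - δ'
    · -- far case
      have hKle : fejK n (2*Real.pi*l/m) ≤ κ := fejK_le n hccpos (hcc _ hfl.1 hfl.2)
      have hml := hfar (-(2*Real.pi*l/m)) B D hD hB F G x y
      rw [← hform] at hml
      have h1 : ‖Ψ l‖ ≤ Cu * W := by
        rw [hW]
        calc ‖Ψ l‖ ≤ Cu * D * Real.sqrt (∑ j ∈ F, ‖x j‖ ^ 2) * Real.sqrt (∑ k ∈ G, ‖y k‖ ^ 2) := hml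
          _ = Cu * (D * Real.sqrt (∑ j ∈ F, ‖x j‖ ^ 2) * Real.sqrt (∑ k ∈ G, ‖y k‖ ^ 2)) := by ring
      have hK0 := fejK_nonneg n (2*Real.pi*l/m)
      have hεW : 0 ≤ fejK n (2*Real.pi*l/m) * (ε/2 * W) := by positivity
      nlinarith [norm_nonneg (Ψ l)]
    · -- near case
      have hnr : MlBoundedBy (fun k j => A k j - modMatrix A (-(2*Real.pi*l/m)) k j) (ε/2) := by
        rcases not_and_or.mp hfl with hc | hc
        · push_neg at hc
          exact hnear _ (by rw [abs_of_nonpos (by linarith)]; simpa using hc)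
        · push_neg at hc
          have heq : modMatrix A (-(2*Real.pi*l/m)) = modMatrix A (2*Real.pi - 2*Real.pi*l/m) :=
            modMatrix_two_pi_sub A _
          have := hnear (2*Real.pi - 2*Real.pi*l/m)
            (by rw [abs_of_nonneg (by linarith)]; linarith)
          rw [← heq] at this
          exact this
      have hml := hnr B D hD hB F G x y
      rw [← hform] at hml
      have h1 : ‖Ψ l‖ ≤ ε/2 * W := by
        rw [hW]
        calc ‖Ψ l‖ ≤ ε/2 * D * Real.sqrt (∑ j ∈ F, ‖x j‖ ^ 2) * Real.sqrt (∑ k ∈ G, ‖y k‖ ^ 2) := hml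
          _ = ε/2 * (D * Real.sqrt (∑ j ∈ F, ‖x j‖ ^ 2) * Real.sqrt (∑ k ∈ G, ‖y k‖ ^ 2)) := by ring
      have hK0 := fejK_nonneg n (2*Real.pi*l/m)
      have hκCu : 0 ≤ κ * (Cu * W) := by positivity
      nlinarith
  -- conclusion
  rw [hΦ]
  have hbig : ‖∑ l ∈ Finset.range m, ((fejK n (2*Real.pi*l/m) : ℝ) : ℂ) * Ψ l‖
      ≤ ∑ l ∈ Finset.range m, (fejK n (2*Real.pi*l/m) * (ε/2 * W) + κ * (Cu * W)) := by
    calc ‖∑ l ∈ Finset.range m, ((fejK n (2*Real.pi*l/m) : ℝ) : ℂ) * Ψ l‖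
        ≤ ∑ l ∈ Finset.range m, ‖((fejK n (2*Real.pi*l/m) : ℝ) : ℂ) * Ψ l‖ := norm_sum_le _ _
      _ ≤ ∑ l ∈ Finset.range m, (fejK n (2*Real.pi*l/m) * (ε/2 * W) + κ * (Cu * W)) := by
          refine Finset.sum_le_sum fun l hl => ?_
          rw [norm_mul, Complex.norm_real, Real.norm_eq_abs,
            abs_of_nonneg (fejK_nonneg n _)]
          exact hΨbound l hl
  have hsplit : ∑ l ∈ Finset.range m, (fejK n (2*Real.pi*l/m) * (ε/2 * W) + κ * (Cu * W))
      = (m:ℝ) * (ε/2 * W) + (m:ℝ) * (κ * (Cu * W)) := by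
    rw [Finset.sum_add_distrib, ← Finset.sum_mul, hKsum, Finset.sum_const, Finset.card_range,
      nsmul_eq_mul]
  calc ‖(m:ℂ)⁻¹ * ∑ l ∈ Finset.range m, ((fejK n (2*Real.pi*l/m) : ℝ) : ℂ) * Ψ l‖
      = (m:ℝ)⁻¹ * ‖∑ l ∈ Finset.range m, ((fejK n (2*Real.pi*l/m) : ℝ) : ℂ) * Ψ l‖ := by
        rw [norm_mul, norm_inv, Complex.norm_natCast]
    _ ≤ (m:ℝ)⁻¹ * ((m:ℝ) * (ε/2 * W) + (m:ℝ) * (κ * (Cu * W))) := by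
        refine mul_le_mul_of_nonneg_left ?_ (by positivity)
        rw [← hsplit]
        exact hbig
    _ = ε/2 * W + κ * Cu * W := by
        field_simp
    _ ≤ ε * D * Real.sqrt (∑ j ∈ F, ‖x j‖ ^ 2) * Real.sqrt (∑ k ∈ G, ‖y k‖ ^ 2) := by
        have hκCu : κ * Cu ≤ ε/2 := hn
        have h2 : κ * Cu * W ≤ ε/2 * W := mul_le_mul_of_nonneg_right hκCu hW0
        calc ε/2 * W + κ * Cu * W ≤ ε * W := by linarith
          _ = ε * D * Real.sqrt (∑ j ∈ F, ‖x j‖ ^ 2) * Real.sqrt (∑ k ∈ G, ‖y k‖ ^ 2) := by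
              rw [hW]; ring

end SchurAux

namespace SchurAux
set_option linter.unusedSectionVars false

/-- Forward direction: continuity of `t ↦ f_A(t)`. -/
lemma forward_cont (A : ℕ → ℕ → (H →L[ℂ] H)) (hL : MemL1l A) :
    ∀ t ε : ℝ, 0 < ε → ∃ δ : ℝ, 0 < δ ∧ ∀ s : ℝ, |s - t| < δ →
      MlBoundedBy (fun k j => modMatrix A s k j - modMatrix A t k j) ε := by
  intro t ε hε
  obtain ⟨_, happ⟩ := hL
  obtain ⟨P, ⟨⟨N, hN⟩, ⟨M, hM⟩⟩, hP⟩ := happ (ε/3) (by linarith)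
  have hM0 : 0 ≤ M := le_trans (norm_nonneg _) (hM 0 0)
  set cardN : ℝ := ((Finset.Icc (-(N:ℤ)) (N:ℤ)).card : ℝ) with hcardN
  have hcard0 : 0 ≤ cardN := by positivity
  set δ : ℝ := min ((N:ℝ)+1)⁻¹ (ε/(3*(cardN+1)*(2*((N:ℝ)+1)*(M+1)))) with hδdef
  have hδpos : 0 < δ := lt_min (by positivity) (by positivity)
  refine ⟨δ, hδpos, fun s hs => ?_⟩
  set AP : ℕ → ℕ → (H →L[ℂ] H) := fun k j => A k j - P k j with hAP
  set Q : ℕ → ℕ → (H →L[ℂ] H) := fun k j => modMatrix P s k j - modMatrix P t k j with hQ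
  have hQsupp : ∀ k j : ℕ, N < ((j:ℤ)-(k:ℤ)).natAbs → Q k j = 0 := by
    intro k j h
    simp [hQ, modMatrix_eq, hN k j h]
  have hQbd : ∀ k j : ℕ, ‖Q k j‖ ≤ 2*((N:ℝ)+1)*(M+1)*δ := by
    intro k j
    by_cases hband : N < ((j:ℤ)-(k:ℤ)).natAbs
    · rw [hQsupp k j hband, norm_zero]
      positivity
    · push_neg at hband
      have hQentry : Q k j
          = (eθ ((((j:ℤ):ℝ) - ((k:ℤ):ℝ)) * s) - eθ ((((j:ℤ):ℝ) - ((k:ℤ):ℝ)) * t)) • P k j := by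
        simp only [hQ, modMatrix_eq, sub_smul]
      rw [hQentry, norm_smul]
      set dd : ℝ := ((j:ℤ):ℝ) - ((k:ℤ):ℝ) with hdd
      have hddabs : |dd| ≤ (N:ℝ) := by
        have h1 : |(j:ℤ)-(k:ℤ)| ≤ (N:ℤ) := by
          rw [Int.abs_eq_natAbs]
          exact_mod_cast hband
        have h2 : ((|(j:ℤ)-(k:ℤ)| : ℤ) : ℝ) ≤ ((N:ℤ) : ℝ) := by exact_mod_cast h1
        rw [Int.cast_abs] at h2
        rw [hdd]
        push_cast at h2 ⊢
        exact h2
      have hδ1 : δ ≤ ((N:ℝ)+1)⁻¹ := min_le_left _ _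
      have hst : |s - t| ≤ δ := le_of_lt hs
      have hfac : ‖eθ (dd * s) - eθ (dd * t)‖ ≤ 2*((N:ℝ)+1)*δ := by
        have hsplit : eθ (dd*s) - eθ (dd*t) = eθ (dd*t) * (eθ (dd*(s-t)) - 1) := by
          rw [mul_sub, ← eθ_add, mul_one]
          congr 2
          ring
        rw [hsplit, norm_mul, norm_eθ, one_mul]
        have huabs : ‖((dd*(s-t) : ℝ) : ℂ) * Complex.I‖ = |dd*(s-t)| := by
          rw [norm_mul, Complex.norm_real, Complex.norm_I, mul_one, Real.norm_eq_abs]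
        have hu1 : |dd*(s-t)| ≤ 1 := by
          rw [abs_mul]
          calc |dd| * |s-t| ≤ (N:ℝ) * δ :=
                mul_le_mul hddabs hst (abs_nonneg _) (Nat.cast_nonneg N)
            _ ≤ ((N:ℝ)+1) * ((N:ℝ)+1)⁻¹ := by
                refine mul_le_mul (by linarith) hδ1 hδpos.le (by positivity)
            _ = 1 := mul_inv_cancel₀ (by positivity)
        have hexp := Complex.norm_exp_sub_one_le (x := ((dd*(s-t) : ℝ) : ℂ) * Complex.I)
          (by rw [huabs]; exact hu1)
        calc ‖eθ (dd*(s-t)) - 1‖ ≤ 2 * |dd*(s-t)| := by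
              rw [show eθ (dd*(s-t)) = Complex.exp (((dd*(s-t) : ℝ) : ℂ) * Complex.I) from rfl]
              rw [← huabs]
              exact hexp
          _ ≤ 2*((N:ℝ)+1)*δ := by
              rw [abs_mul]
              have : |dd| * |s-t| ≤ ((N:ℝ)+1) * δ := by
                refine mul_le_mul (by linarith) hst (abs_nonneg _) (by positivity)
              linarith
      calc ‖eθ (dd * s) - eθ (dd * t)‖ * ‖P k j‖ ≤ (2*((N:ℝ)+1)*δ) * (M+1) := by
            refine mul_le_mul hfac (by linarith [hM k j]) (norm_nonneg _) (by positivity)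
        _ = 2*((N:ℝ)+1)*(M+1)*δ := by ring
  have hbandml : MlBoundedBy Q (cardN * (2*((N:ℝ)+1)*(M+1)*δ)) := ml_band N hQsupp hQbd
  have h1 : MlBoundedBy (fun k j => modMatrix AP s k j - modMatrix AP t k j) (ε/3 + ε/3) :=
    ml_sub (ml_mod hP s) (ml_mod hP t)
  have hdecomp : (fun k j => modMatrix A s k j - modMatrix A t k j)
      = fun k j => (modMatrix AP s k j - modMatrix AP t k j) + Q k j := by
    funext k j
    simp only [hAP, hQ, modMatrix_eq, smul_sub]
    abel
  rw [hdecomp]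
  refine ml_mono (ml_add h1 hbandml) ?_
  have hδ2 : δ ≤ ε/(3*(cardN+1)*(2*((N:ℝ)+1)*(M+1))) := min_le_right _ _
  have hkey : cardN * (2*((N:ℝ)+1)*(M+1)*δ) ≤ ε/3 := by
    have hX : (0:ℝ) < 3*(cardN+1)*(2*((N:ℝ)+1)*(M+1)) := by positivity
    have h3 : δ * (3*(cardN+1)*(2*((N:ℝ)+1)*(M+1))) ≤ ε := by
      rw [← le_div_iff₀ hX]
      exact hδ2
    nlinarith [hδpos.le, hcard0, mul_nonneg (mul_nonneg (by positivity : (0:ℝ) ≤ 2*((N:ℝ)+1)) (by positivity : (0:ℝ) ≤ M+1)) hδpos.le]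
  linarith

/-- A uniform multiplier bound for `A - f_A(s)` over all `s`. -/
lemma uniform_bound (A : ℕ → ℕ → (H →L[ℂ] H))
    (h1 : ∀ t : ℝ, MemMl (modMatrix A t))
    (h2 : ∀ t : ℝ, ∀ ε : ℝ, 0 < ε → ∃ δ : ℝ, 0 < δ ∧ ∀ s : ℝ, |s - t| < δ →
      MlBoundedBy (fun k j => modMatrix A s k j - modMatrix A t k j) ε) :
    ∃ Cu : ℝ, 0 ≤ Cu ∧ ∀ s : ℝ, MlBoundedBy (fun k j => A k j - modMatrix A s k j) Cu := by
  classical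
  choose δf hδpos hδ using fun t => h2 t 1 one_pos
  choose Cf hCf0 hCf using h1
  have hA : MlBoundedBy A (Cf 0) := by
    have := hCf 0
    rwa [modMatrix_zero] at this
  obtain ⟨T, hT⟩ := isCompact_Icc (a := (0:ℝ)) (b := 2*Real.pi) |>.elim_finite_subcover
    (fun t : ℝ => Metric.ball t (δf t)) (fun t => Metric.isOpen_ball)
    (fun u hu => Set.mem_iUnion.mpr ⟨u, Metric.mem_ball_self (hδpos u)⟩)
  refine ⟨Cf 0 + 1 + ∑ t ∈ T, Cf t, by
    have hs1 : 0 ≤ ∑ t ∈ T, Cf t := Finset.sum_nonneg (fun i _ => hCf0 i)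
    have hs2 := hCf0 0
    linarith, fun s => ?_⟩
  have hπ := Real.two_pi_pos
  set q : ℤ := ⌊s/(2*Real.pi)⌋ with hqdef
  set s' : ℝ := s - 2*Real.pi*q with hs'def
  have hmodeq : modMatrix A s = modMatrix A s' := by
    rw [show s = s' + 2*Real.pi*(q:ℝ) by rw [hs'def]; ring]
    exact modMatrix_period A s' q
  have hfl : (q:ℝ) ≤ s/(2*Real.pi) := Int.floor_le _
  have hfu : s/(2*Real.pi) < q + 1 := Int.lt_floor_add_one _
  have hs'0 : 0 ≤ s' := by
    rw [hs'def]
    have := (le_div_iff₀ hπ).mp hfl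
    nlinarith
  have hs'2 : s' ≤ 2*Real.pi := by
    rw [hs'def]
    have := (div_lt_iff₀ hπ).mp hfu
    nlinarith
  obtain ⟨t0, ht0T, ht0⟩ := Set.mem_iUnion₂.mp (hT (Set.mem_Icc.mpr ⟨hs'0, hs'2⟩))
  have hdist : |s' - t0| < δf t0 := by
    rw [Metric.mem_ball, Real.dist_eq] at ht0
    exact ht0
  have ha : MlBoundedBy (fun k j => A k j - modMatrix A t0 k j) (Cf 0 + Cf t0) :=
    ml_sub hA (hCf t0)
  have hb' := hδ t0 s' hdist
  have hb : MlBoundedBy (fun k j => modMatrix A t0 k j - modMatrix A s' k j) 1 := by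
    have hneg := ml_neg hb'
    rwa [show (fun k j => -(modMatrix A s' k j - modMatrix A t0 k j))
        = fun k j => modMatrix A t0 k j - modMatrix A s' k j
      from funext fun k => funext fun j => neg_sub _ _] at hneg
  have hc := ml_add ha hb
  rw [show (fun k j => (A k j - modMatrix A t0 k j) + (modMatrix A t0 k j - modMatrix A s' k j))
      = fun k j => A k j - modMatrix A s' k j
    from funext fun k => funext fun j => sub_add_sub_cancel _ _ _] at hc
  rw [← hmodeq] at hc
  refine ml_mono hc ?_
  have hle : Cf t0 ≤ ∑ t ∈ T, Cf t := Finset.single_le_sum (fun i _ => hCf0 i) ht0T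
  linarith

/-- Converse direction. -/
lemma converse (A : ℕ → ℕ → (H →L[ℂ] H))
    (h1 : ∀ t : ℝ, MemMl (modMatrix A t))
    (h2 : ∀ t : ℝ, ∀ ε : ℝ, 0 < ε → ∃ δ : ℝ, 0 < δ ∧ ∀ s : ℝ, |s - t| < δ →
      MlBoundedBy (fun k j => modMatrix A s k j - modMatrix A t k j) ε) :
    MemL1l A := by
  have hA : MemMl A := by
    have := h1 0
    rwa [modMatrix_zero] at this
  obtain ⟨CA, hCA0, hCA⟩ := hA
  obtain ⟨Cu, hCu0, hCu⟩ := uniform_bound A h1 h2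
  refine ⟨⟨CA, hCA0, hCA⟩, fun ε hε => ?_⟩
  obtain ⟨δ0, hδ0pos, hδ0⟩ := h2 0 (ε/2) (by linarith)
  set δ' : ℝ := min δ0 1 with hδ'def
  have hδ'pos : 0 < δ' := lt_min hδ0pos one_pos
  have hδ'le : δ' ≤ 1 := min_le_right _ _
  have hnear : ∀ s : ℝ, |s| < δ' → MlBoundedBy (fun k j => A k j - modMatrix A s k j) (ε/2) := by
    intro s hs
    have h := hδ0 s (by rw [sub_zero]; exact lt_of_lt_of_le hs (min_le_left _ _))
    rw [modMatrix_zero] at h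
    have hneg := ml_neg h
    rwa [show (fun k j => -(modMatrix A s k j - A k j)) = fun k j => A k j - modMatrix A s k j
      from funext fun k => funext fun j => neg_sub _ _] at hneg
  obtain ⟨cc, hccpos, hcc⟩ := exists_lb hδ'pos hδ'le
  obtain ⟨n, hn0⟩ := exists_nat_gt (8*(Cu+1)/(cc^2*ε))
  have hnkey : ((n:ℝ)+1)⁻¹ * 4 / cc^2 * Cu ≤ ε/2 := by
    have hx : (0:ℝ) < cc^2*ε := by positivity
    have h8 : 8*(Cu+1) < (n:ℝ) * (cc^2*ε) := (div_lt_iff₀ hx).mp hn0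
    have hn1 : (0:ℝ) < (n:ℝ)+1 := by positivity
    rw [div_mul_eq_mul_div, div_le_div_iff₀ (by positivity : (0:ℝ) < cc^2) (by norm_num : (0:ℝ) < 2)]
    -- ((n+1)⁻¹ * 4 * Cu) * 2 ≤ ε * cc^2
    rw [inv_mul_eq_div, div_mul_eq_mul_div, div_mul_eq_mul_div, div_le_iff₀ hn1]
    nlinarith [hCu0, hε, hccpos, sq_nonneg cc, mul_pos hx hn1]
  refine ⟨fun k j => fcoefC n ((j:ℤ)-(k:ℤ)) • A k j, ⟨⟨n, fun k j hgt => ?_⟩,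
    ⟨((n:ℝ)+1)*CA, fun k j => ?_⟩⟩, ?_⟩
  · show fcoefC n ((j:ℤ)-(k:ℤ)) • A k j = 0
    have habs : (n:ℤ) < |(j:ℤ)-(k:ℤ)| := by
      rw [Int.abs_eq_natAbs]
      exact_mod_cast hgt
    rw [fcoefC_support n _ habs, zero_smul]
  · show ‖fcoefC n ((j:ℤ)-(k:ℤ)) • A k j‖ ≤ ((n:ℝ)+1)*CA
    rw [norm_smul]
    exact mul_le_mul (norm_fcoefC_le n _) (ml_entry_bound hCA0 hCA k j) (norm_nonneg _)
      (by positivity)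
  · exact main_estimate A n ε Cu δ' cc hε hCu0 hδ'pos hnear hCu hccpos hcc hnkey

end SchurAux

open SchurAux in
/-- `A ∈ L¹_l(ℓ²(H))` iff `t ↦ f_A(t)` is a continuous `M_l(ℓ²(H))`-valued function. -/
theorem memL1l_iff_modMatrix_continuous (A : ℕ → ℕ → (H →L[ℂ] H)) :
    MemL1l A ↔
      ((∀ t : ℝ, MemMl (modMatrix A t)) ∧
        ∀ t : ℝ, ∀ ε : ℝ, 0 < ε → ∃ δ : ℝ, 0 < δ ∧ ∀ s : ℝ, |s - t| < δ →
          MlBoundedBy (fun k j => modMatrix A s k j - modMatrix A t k j) ε) := by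
  constructor
  · intro hL
    refine ⟨fun t => ?_, forward_cont A hL⟩
    obtain ⟨⟨C, hC0, hC⟩, _⟩ := hL
    exact ⟨C, hC0, ml_mod hC t⟩
  · rintro ⟨h1, h2⟩
    exact converse A h1 h2
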